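/- If x has finite support, then there is a unique least finite set of atoms supporting x, namely the intersection of all finite supporting sets. -/

import Mathlib

/-- K supports x. -/
def NSupports {𝔸 X : Type*} [MulAction (Equiv.Perm 𝔸) X] (K : Set 𝔸) (x : X) : Prop :=
  ∀ σ : Equiv.Perm 𝔸, (∀ a ∈ K, σ a = a) → σ • x = x

/-- The support of x: intersection of all finite supporting sets. -/
def nsupp {𝔸 X : Type*} [MulAction (Equiv.Perm 𝔸) X] (x : X) : Set 𝔸 :=
  ⋂₀ {C : Set 𝔸 | C.Finite ∧ NSupports C x}

/-- Any injection defined on a finite subset of an infinite type extends to a permutation. -/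
lemma exists_perm_extend {𝔸 : Type*} [Infinite 𝔸] {S : Set 𝔸} (hS : S.Finite)
    (f : 𝔸 → 𝔸) (hinj : Set.InjOn f S) :
    ∃ σ : Equiv.Perm 𝔸, ∀ a ∈ S, σ a = f a := by
  have hlt : (Cardinal.mk S) < Cardinal.mk 𝔸 :=
    lt_of_lt_of_le hS.lt_aleph0 (Cardinal.infinite_iff.mp ‹Infinite 𝔸›)
  obtain ⟨g, hg⟩ := Cardinal.extend_function_of_lt
    (⟨fun a : S => f a, fun a b h => Subtype.ext (hinj a.2 b.2 h)⟩ : S ↪ 𝔸)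
    hlt ⟨Equiv.refl 𝔸⟩
  exact ⟨g, fun a ha => hg ⟨a, ha⟩⟩

/-- The intersection of two finite supporting sets supports. -/
lemma nsupports_inter {𝔸 : Type*} [Infinite 𝔸] {X : Type*} [MulAction (Equiv.Perm 𝔸) X]
    {x : X} {A B : Set 𝔸} (hAf : A.Finite) (hBf : B.Finite)
    (hA : NSupports A x) (hB : NSupports B x) : NSupports (A ∩ B) x := by
  classical
  intro σ hσ
  -- fresh atoms outside F
  set F : Set 𝔸 := A ∪ B ∪ (σ.symm '' A) with hF
  have hFfin : F.Finite := ((hAf.union hBf).union (hAf.image σ.symm))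
  have hFc : (Fᶜ : Set 𝔸).Infinite := Set.Finite.infinite_compl hFfin
  have hBA : (B \ A : Set 𝔸).Finite := hBf.diff
  have hle : Cardinal.mk (B \ A : Set 𝔸) ≤ Cardinal.mk (Fᶜ : Set 𝔸) := by
    refine le_of_lt (lt_of_lt_of_le hBA.lt_aleph0 ?_)
    exact Cardinal.infinite_iff.mp hFc.to_subtype
  obtain ⟨c⟩ := Cardinal.le_def _ _ |>.mp hle
  -- π : fixes A, sends B \ A to fresh atoms
  set f : 𝔸 → 𝔸 := fun a => if h : a ∈ B \ A then (c ⟨a, h⟩ : 𝔸) else a with hfdef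
  have hfA : ∀ a ∈ A, f a = a := by
    intro a ha
    simp only [hfdef]
    rw [dif_neg (fun h => h.2 ha)]
  have hcF : ∀ h : 𝔸, ∀ hh : h ∈ B \ A, (c ⟨h, hh⟩ : 𝔸) ∉ F := fun h hh => (c ⟨h, hh⟩).2
  have hinj : Set.InjOn f (A ∪ B) := by
    intro a ha b hb hab
    by_cases h1 : a ∈ B \ A <;> by_cases h2 : b ∈ B \ A
    · simp only [hfdef, dif_pos h1, dif_pos h2] at hab
      exact congrArg Subtype.val (c.injective (Subtype.ext hab))
    · exfalso
      simp only [hfdef, dif_pos h1, dif_neg h2] at hab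
      exact hcF a h1 (by rw [hab]; exact Or.inl hb)
    · exfalso
      simp only [hfdef, dif_neg h1, dif_pos h2] at hab
      exact hcF b h2 (by rw [← hab]; exact Or.inl ha)
    · simpa only [hfdef, dif_neg h1, dif_neg h2] using hab
  obtain ⟨π, hπ⟩ := exists_perm_extend (hAf.union hBf) f hinj
  have hπA : ∀ a ∈ A, π a = a := fun a ha => (hπ a (Or.inl ha)).trans (hfA a ha)
  have hπBA : ∀ b ∈ B \ A, (π b : 𝔸) ∉ F := by
    intro b hb
    rw [hπ b (Or.inr hb.1), hfdef]
    simp only [dif_pos hb]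
    exact hcF b hb
  have hπx : π • x = x := hA π hπA
  -- key claim: for a ∈ A \ B, π.symm (σ.symm a) ∉ B
  have hkey : ∀ a ∈ A \ B, π.symm (σ.symm a) ∉ B := by
    intro a ha hmem
    set b := π.symm (σ.symm a) with hbdef
    have hπb : π b = σ.symm a := by rw [hbdef, Equiv.apply_symm_apply]
    by_cases hbA : b ∈ A
    · -- b ∈ A ∩ B, so π b = b and σ b = b
      have : π b = b := hπA b hbA
      have hsb : σ.symm a = b := by rw [← hπb, this]
      have : σ b = b := hσ b ⟨hbA, hmem⟩
      have : a = b := by rw [← this, ← hsb, Equiv.apply_symm_apply]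
      exact ha.2 (this ▸ hmem)
    · -- b ∈ B \ A, so π b is fresh, but π b = σ.symm a ∈ σ.symm '' A
      have : (π b : 𝔸) ∉ F := hπBA b ⟨hmem, hbA⟩
      exact this (hπb ▸ Or.inr ⟨a, ha.1, rfl⟩)
  -- τ : fixes B, sends a ∈ A \ B to π.symm (σ.symm a)
  set g : 𝔸 → 𝔸 := fun a => if h : a ∈ A \ B then π.symm (σ.symm a) else a with hgdef
  have hgB : ∀ a ∈ B, g a = a := by
    intro a ha
    simp only [hgdef]
    rw [dif_neg (fun h => h.2 ha)]
  have hginj : Set.InjOn g (A ∪ B) := by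
    intro a ha b hb hab
    by_cases h1 : a ∈ A \ B <;> by_cases h2 : b ∈ A \ B
    · simp only [hgdef, dif_pos h1, dif_pos h2] at hab
      exact σ.symm.injective (π.symm.injective hab)
    · exfalso
      simp only [hgdef, dif_pos h1, dif_neg h2] at hab
      have hbB : b ∈ B := by
        rcases hb with h | h
        · by_contra hB'; exact h2 ⟨h, hB'⟩
        · exact h
      exact hkey a h1 (by rw [hab]; exact hbB)
    · exfalso
      simp only [hgdef, dif_neg h1, dif_pos h2] at hab
      have haB : a ∈ B := by
        rcases ha with h | h
        · by_contra hB'; exact h1 ⟨h, hB'⟩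
        · exact h
      exact hkey b h2 (by rw [← hab]; exact haB)
    · simpa only [hgdef, dif_neg h1, dif_neg h2] using hab
  obtain ⟨τ, hτ⟩ := exists_perm_extend (hAf.union hBf) g hginj
  have hτB : ∀ a ∈ B, τ a = a := fun a ha => (hτ a (Or.inr ha)).trans (hgB a ha)
  have hτx : τ • x = x := hB τ hτB
  -- σ * π * τ fixes A pointwise
  have hcomp : ∀ a ∈ A, (σ * π * τ) a = a := by
    intro a ha
    by_cases haB : a ∈ B
    · have h1 : τ a = a := hτB a haB
      have h2 : π a = a := hπA a ha
      have h3 : σ a = a := hσ a ⟨ha, haB⟩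
      simp [Equiv.Perm.mul_apply, h1, h2, h3]
    · have h1 : τ a = π.symm (σ.symm a) := by
        rw [hτ a (Or.inl ha), hgdef]; simp only [dif_pos (Set.mem_diff_of_mem ha haB)]
      simp [Equiv.Perm.mul_apply, h1]
  have hcx : (σ * π * τ) • x = x := hA _ hcomp
  calc σ • x = σ • (π • x) := by rw [hπx]
    _ = σ • (π • (τ • x)) := by rw [hτx]
    _ = (σ * π * τ) • x := by rw [mul_smul, mul_smul]
    _ = x := hcx

/-- Intersection of a finite family of finite supporting sets (together with a base
supporting set) supports. -/
lemma nsupports_sInter {𝔸 : Type*} [Infinite 𝔸] {X : Type*} [MulAction (Equiv.Perm 𝔸) X]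
    {x : X} {T : Set (Set 𝔸)} (hT : T.Finite)
 :
    (∀ C ∈ T, C.Finite ∧ NSupports C x) →
    ∀ C₀ : Set 𝔸, C₀.Finite → NSupports C₀ x → NSupports (C₀ ∩ ⋂₀ T) x := by
  refine Set.Finite.induction_on (motive := fun T _ => (∀ C ∈ T, C.Finite ∧ NSupports C x) →
      ∀ C₀ : Set 𝔸, C₀.Finite → NSupports C₀ x → NSupports (C₀ ∩ ⋂₀ T) x) T hT ?_ ?_
  · intro _ C₀ hC₀f hC₀s
    simpa using hC₀s
  · intro s T hsT hTf ih hmem C₀ hC₀f hC₀s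
    have hs : s.Finite ∧ NSupports s x := hmem s (Set.mem_insert s T)
    have h1 : NSupports (C₀ ∩ s) x := nsupports_inter hC₀f hs.1 hC₀s hs.2
    have h2 := ih (fun C hC => hmem C (Set.mem_insert_of_mem s hC))
      (C₀ ∩ s) (hC₀f.inter_of_left s) h1
    have heq : C₀ ∩ ⋂₀ insert s T = (C₀ ∩ s) ∩ ⋂₀ T := by
      rw [Set.sInter_insert, ← Set.inter_assoc]
    rw [heq]
    exact h2

theorem least_finite_support {𝔸 : Type*} [Infinite 𝔸]
    {X : Type*} [MulAction (Equiv.Perm 𝔸) X] (x : X)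
    (hfs : ∃ C : Set 𝔸, C.Finite ∧ NSupports C x) :
    (nsupp (𝔸 := 𝔸) x).Finite ∧ NSupports (nsupp (𝔸 := 𝔸) x) x ∧
      ∀ C : Set 𝔸, C.Finite → NSupports C x → nsupp (𝔸 := 𝔸) x ⊆ C := by
  obtain ⟨C₀, hC₀f, hC₀s⟩ := hfs
  have hsubset : ∀ C : Set 𝔸, C.Finite → NSupports C x → nsupp (𝔸 := 𝔸) x ⊆ C :=
    fun C hCf hCs => Set.sInter_subset_of_mem ⟨hCf, hCs⟩
  have hfin : (nsupp (𝔸 := 𝔸) x).Finite := hC₀f.subset (hsubset C₀ hC₀f hC₀s)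
  refine ⟨hfin, ?_, hsubset⟩
  -- nsupp x = C₀ ∩ ⋂₀ T for a finite family T of finite supporting sets
  set T : Set (Set 𝔸) := {C | (C.Finite ∧ NSupports C x) ∧ C ⊆ C₀} with hTdef
  have hTfin : T.Finite := hC₀f.finite_subsets.subset (fun C hC => hC.2)
  have hTmem : ∀ C ∈ T, C.Finite ∧ NSupports C x := fun C hC => hC.1
  have heq : nsupp (𝔸 := 𝔸) x = C₀ ∩ ⋂₀ T := by
    apply Set.Subset.antisymm
    · refine Set.subset_inter (hsubset C₀ hC₀f hC₀s) ?_
      exact Set.subset_sInter fun C hC => hsubset C hC.1.1 hC.1.2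
    · intro a ha
      intro C hC
      have h1 : NSupports (C ∩ C₀) x := nsupports_inter hC.1 hC₀f hC.2 hC₀s
      have h2 : C ∩ C₀ ∈ T := ⟨⟨hC.1.inter_of_left C₀, h1⟩, Set.inter_subset_right⟩
      exact (ha.2 (C ∩ C₀) h2).1
  rw [heq]
  exact nsupports_sInter hTfin hTmem C₀ hC₀f hC₀s
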